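/- The Bhattacharyya distance lower-bounds the Resistor distance via Chernoff: B(p,q) ≤ C(p,q) ≤ R(p,q), hence B(p,q) ≤ R(p,q). -/

import Mathlib

open Finset Real

lemma bhatt_le_half_kl {α : Type*} [Fintype α] (p q : α → ℝ)
    (hp : ∀ x, 0 < p x) (hq : ∀ x, 0 < q x)
    (hps : ∑ x, p x = 1) :
    -Real.log (∑ x, Real.sqrt (p x * q x)) ≤ (∑ x, p x * Real.log (p x / q x)) / 2 := by
  have hne : Nonempty α := by
    by_contra h
    rw [not_nonempty_iff] at h
    rw [Finset.univ_eq_empty, Finset.sum_empty] at hps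
    norm_num at hps
  have hS : (0:ℝ) < ∑ x, Real.sqrt (p x * q x) :=
    Finset.sum_pos (fun x _ => Real.sqrt_pos.2 (mul_pos (hp x) (hq x))) ⟨Classical.arbitrary α, by simp⟩
  have key : ∏ x, (Real.sqrt (q x / p x)) ^ (p x) ≤ ∑ x, Real.sqrt (p x * q x) := by
    have := Real.geom_mean_le_arith_mean_weighted Finset.univ p (fun x => Real.sqrt (q x / p x))
      (fun x _ => (hp x).le) hps (fun x _ => Real.sqrt_nonneg _)
    refine this.trans_eq (Finset.sum_congr rfl fun x _ => ?_)
    rw [Real.sqrt_div (hq x).le, Real.sqrt_mul (hp x).le,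
      mul_div_assoc', mul_comm, mul_div_assoc, Real.div_sqrt]
    ring
  have hprod : (0:ℝ) < ∏ x, (Real.sqrt (q x / p x)) ^ (p x) :=
    Finset.prod_pos fun x _ => Real.rpow_pos_of_pos (Real.sqrt_pos.2 (div_pos (hq x) (hp x))) _
  have hlog := Real.log_le_log hprod key
  rw [Real.log_prod (fun x _ => (Real.rpow_pos_of_pos (Real.sqrt_pos.2 (div_pos (hq x) (hp x))) _).ne')] at hlog
  have heq : ∀ x : α, Real.log ((Real.sqrt (q x / p x)) ^ (p x)) = -(p x * Real.log (p x / q x) / 2) := by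
    intro x
    rw [Real.log_rpow (Real.sqrt_pos.2 (div_pos (hq x) (hp x))),
      Real.log_sqrt (div_pos (hq x) (hp x)).le,
      Real.log_div (hq x).ne' (hp x).ne', Real.log_div (hp x).ne' (hq x).ne']
    ring
  rw [Finset.sum_congr rfl (fun x _ => heq x), Finset.sum_neg_distrib, ← Finset.sum_div] at hlog
  linarith
lemma kl_pos {α : Type*} [Fintype α] (p q : α → ℝ)
    (hp : ∀ x, 0 < p x) (hq : ∀ x, 0 < q x)
    (hps : ∑ x, p x = 1) (hqs : ∑ x, q x = 1) (hpq : p ≠ q) :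
    0 < ∑ x, p x * Real.log (p x / q x) := by
  obtain ⟨x₀, hx₀⟩ : ∃ x, p x ≠ q x := by
    by_contra h; push_neg at h; exact hpq (funext h)
  have hlt : ∑ x, p x * Real.log (q x / p x) < ∑ x, (q x - p x) := by
    refine Finset.sum_lt_sum (fun x _ => ?_) ⟨x₀, Finset.mem_univ _, ?_⟩
    · have := Real.log_le_sub_one_of_pos (div_pos (hq x) (hp x))
      have h2 := mul_le_mul_of_nonneg_left this (hp x).le
      calc p x * Real.log (q x / p x) ≤ p x * (q x / p x - 1) := h2
        _ = q x - p x := by field_simp [(hp x).ne']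
    · have h1 : Real.log (q x₀ / p x₀) < q x₀ / p x₀ - 1 :=
        Real.log_lt_sub_one_of_pos (div_pos (hq x₀) (hp x₀))
          (fun h => hx₀ ((div_eq_one_iff_eq (hp x₀).ne').1 h).symm)
      have h2 := mul_lt_mul_of_pos_left h1 (hp x₀)
      calc p x₀ * Real.log (q x₀ / p x₀) < p x₀ * (q x₀ / p x₀ - 1) := h2
        _ = q x₀ - p x₀ := by field_simp [(hp x₀).ne']
  rw [Finset.sum_sub_distrib, hps, hqs, sub_self] at hlt
  have : ∑ x, p x * Real.log (p x / q x) = -∑ x, p x * Real.log (q x / p x) := by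
    rw [← Finset.sum_neg_distrib]
    refine Finset.sum_congr rfl fun x _ => ?_
    rw [Real.log_div (hp x).ne' (hq x).ne', Real.log_div (hq x).ne' (hp x).ne']; ring
  linarith

theorem bhattacharyya_le_resistor
    {α : Type*} [Fintype α] (p q : α → ℝ)
    (hp : ∀ x, 0 < p x) (hq : ∀ x, 0 < q x)
    (hps : ∑ x, p x = 1) (hqs : ∑ x, q x = 1) (hpq : p ≠ q) :
    -Real.log (∑ x, Real.sqrt (p x * q x)) ≤
      (∑ x, p x * Real.log (p x / q x)) * (∑ x, q x * Real.log (q x / p x)) /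
        ((∑ x, p x * Real.log (p x / q x)) + (∑ x, q x * Real.log (q x / p x))) := by
  have hB1 := bhatt_le_half_kl p q hp hq hps
  have hB2 := bhatt_le_half_kl q p hq hp hqs
  have hcomm : ∑ x, Real.sqrt (q x * p x) = ∑ x, Real.sqrt (p x * q x) :=
    Finset.sum_congr rfl fun x _ => by rw [mul_comm]
  rw [hcomm] at hB2
  have hD1 := kl_pos p q hp hq hps hqs hpq
  have hD2 := kl_pos q p hq hp hqs hps (Ne.symm hpq)
  set D1 := ∑ x, p x * Real.log (p x / q x)
  set D2 := ∑ x, q x * Real.log (q x / p x)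
  rcases le_total D1 D2 with h | h
  · refine hB1.trans ?_
    rw [div_le_div_iff₀ two_pos (by linarith)]
    nlinarith
  · refine hB2.trans ?_
    rw [div_le_div_iff₀ two_pos (by linarith)]
    nlinarith
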